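/- (Necessity of a power-law Pareto frontier for collapse.) Let 𝓛 : (0,∞) × (0,∞) → (0,∞) be continuously differentiable in its first argument (compute c) for each model size p. Let P ⊆ (0,∞) be a nonempty set, c* : P → (0,∞) a map whose image is an open interval I ⊆ (0,∞), and 𝓛* : I → (0,∞) a differentiable function satisfying 𝓛*(c) ≤ 𝓛(c,p) for all c ∈ I and p ∈ P, with equality 𝓛*(c*(p)) = 𝓛(c*(p), p) for every p ∈ P. Define ℓ(x,p) = 𝓛(x·c*(p), p)/𝓛(c*(p), p) for x > 0. If there exist an open neighborhood U of 1 and a function φ : U → (0,∞) such that ℓ(x,p) = φ(x) for all x ∈ U and all p ∈ P, then there exist constants a > 0 and δ ∈ ℝ such that 𝓛*(c) = a·c^(−δ) for all c ∈ I. -/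

import Mathlib

/-- **Necessity of a power-law Pareto frontier for scaling collapse.**
If the loss curves `𝓛(c,p)` (C¹ in compute `c`, positive) admit a differentiable Pareto
frontier `𝓛*` on an open interval `I ⊆ (0,∞)` which is the image of the compute-optimal
map `c*`, with `𝓛*(c) ≤ 𝓛(c,p)` and tangency `𝓛*(c*(p)) = 𝓛(c*(p),p)`, and if the
normalized curves `ℓ(x,p) = 𝓛(x·c*(p),p)/𝓛(c*(p),p)` collapse (are `p`-independent) on a
neighborhood of `x = 1`, then `𝓛*` is a power law `a·c^(−δ)` on `I`. -/
theorem stmt_4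
    (𝓛 : ℝ → ℝ → ℝ)
    (hpos : ∀ c p : ℝ, 0 < c → 0 < p → 0 < 𝓛 c p)
    (hC1 : ∀ p : ℝ, 0 < p → ContDiffOn ℝ 1 (fun c => 𝓛 c p) (Set.Ioi 0))
    (P : Set ℝ) (hPne : P.Nonempty) (hP : P ⊆ Set.Ioi 0)
    (cstar : ℝ → ℝ) (hcstar : ∀ p ∈ P, 0 < cstar p)
    (I : Set ℝ) (hIopen : IsOpen I) (hIconn : I.OrdConnected) (hIpos : I ⊆ Set.Ioi 0)
    (himage : cstar '' P = I)
    (Lstar : ℝ → ℝ)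
    (hLdiff : DifferentiableOn ℝ Lstar I)
    (hLpos : ∀ c ∈ I, 0 < Lstar c)
    (hlower : ∀ c ∈ I, ∀ p ∈ P, Lstar c ≤ 𝓛 c p)
    (htangent : ∀ p ∈ P, Lstar (cstar p) = 𝓛 (cstar p) p)
    (ℓ : ℝ → ℝ → ℝ)
    (hℓ : ∀ x p : ℝ, ℓ x p = 𝓛 (x * cstar p) p / 𝓛 (cstar p) p)
    (hcollapse : ∃ U : Set ℝ, IsOpen U ∧ (1:ℝ) ∈ U ∧
      ∃ φ : ℝ → ℝ, ∀ x ∈ U, ∀ p ∈ P, ℓ x p = φ x) :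
    ∃ a : ℝ, 0 < a ∧ ∃ δ : ℝ, ∀ c ∈ I, Lstar c = a * c ^ (-δ) := by
  obtain ⟨p₀, hp₀⟩ := hPne
  have hc₀I : cstar p₀ ∈ I := himage ▸ ⟨p₀, hp₀, rfl⟩
  -- Step 1: tangency gives equality of derivatives on the frontier.
  have hderiv : ∀ p ∈ P, deriv Lstar (cstar p) = deriv (fun c' => 𝓛 c' p) (cstar p) := by
    intro p hp
    have hcI : cstar p ∈ I := himage ▸ ⟨p, hp, rfl⟩
    have hc0 : (0:ℝ) < cstar p := hcstar p hp
    have hFd : DifferentiableAt ℝ (fun c' => 𝓛 c' p) (cstar p) :=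
      ((hC1 p (hP hp)).differentiableOn one_ne_zero).differentiableAt
        (isOpen_Ioi.mem_nhds hc0)
    have hLd : DifferentiableAt ℝ Lstar (cstar p) :=
      hLdiff.differentiableAt (hIopen.mem_nhds hcI)
    have hmin : IsLocalMin (fun c' => 𝓛 c' p - Lstar c') (cstar p) := by
      filter_upwards [hIopen.mem_nhds hcI] with c hc
      have h1 := hlower c hc p hp
      have h2 := htangent p hp
      show 𝓛 (cstar p) p - Lstar (cstar p) ≤ 𝓛 c p - Lstar c
      linarith
    have h0 := hmin.deriv_eq_zero
    rw [deriv_fun_sub hFd hLd] at h0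
    linarith
  -- Step 2: collapse forces the logarithmic derivative to be constant.
  obtain ⟨U, hUopen, hU1, φ, hφ⟩ := hcollapse
  have hD : ∀ q ∈ P, HasDerivAt (fun x => ℓ x q)
      (cstar q * deriv Lstar (cstar q) / Lstar (cstar q)) 1 := by
    intro q hq
    have hcI : cstar q ∈ I := himage ▸ ⟨q, hq, rfl⟩
    have hc0 : (0:ℝ) < cstar q := hcstar q hq
    have hFd : DifferentiableAt ℝ (fun c' => 𝓛 c' q) (cstar q) :=
      ((hC1 q (hP hq)).differentiableOn one_ne_zero).differentiableAt
        (isOpen_Ioi.mem_nhds hc0)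
    have h1 : HasDerivAt (fun x : ℝ => x * cstar q) (cstar q) 1 := by
      simpa using (hasDerivAt_id (1:ℝ)).mul_const (cstar q)
    have hFd' : HasDerivAt (fun c' => 𝓛 c' q) (deriv (fun c' => 𝓛 c' q) (cstar q))
        ((fun x : ℝ => x * cstar q) 1) := by simpa using hFd.hasDerivAt
    have h2 : HasDerivAt (fun x => 𝓛 (x * cstar q) q)
        (deriv (fun c' => 𝓛 c' q) (cstar q) * cstar q) 1 :=
        (hFd'.comp 1 h1 : HasDerivAt ((fun c' => 𝓛 c' q) ∘ fun x : ℝ => x * cstar q) _ 1)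
    have hfun : (fun x => ℓ x q) = fun x => 𝓛 (x * cstar q) q / 𝓛 (cstar q) q :=
      funext fun x => hℓ x q
    rw [hfun]
    have h3 := h2.div_const (𝓛 (cstar q) q)
    have e2 := htangent q hq
    have hLne : Lstar (cstar q) ≠ 0 := (hLpos _ hcI).ne'
    have hLne' : 𝓛 (cstar q) q ≠ 0 := e2 ▸ hLne
    refine h3.congr_deriv ?_
    rw [hderiv q hq, e2]
    ring
  set k := cstar p₀ * deriv Lstar (cstar p₀) / Lstar (cstar p₀) with hkdef
  have hk : ∀ c ∈ I, c * deriv Lstar c / Lstar c = k := by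
    intro c hc
    have hc' : c ∈ cstar '' P := himage.symm ▸ hc
    obtain ⟨p, hp, rfl⟩ := hc'
    have hDp := hD p hp
    have hDp0 := hD p₀ hp₀
    have heq : (fun x => ℓ x p₀) =ᶠ[nhds 1] fun x => ℓ x p := by
      filter_upwards [hUopen.mem_nhds hU1] with x hx
      rw [hφ x hx p hp, hφ x hx p₀ hp₀]
    exact (hDp.congr_of_eventuallyEq heq).unique hDp0
  -- Step 3: integrate the ODE `c L' = k L` on the convex set `I`.
  have hconv : Convex ℝ I := hIconn.convex
  set g := fun c : ℝ => Lstar c * c ^ (-k) with hgdef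
  have hg : ∀ c ∈ I, HasDerivAt g 0 c := by
    intro c hc
    have hc0 : (0:ℝ) < c := hIpos hc
    have h1 : HasDerivAt Lstar (deriv Lstar c) c :=
      (hLdiff.differentiableAt (hIopen.mem_nhds hc)).hasDerivAt
    have h2 : HasDerivAt (fun c : ℝ => c ^ (-k)) ((-k) * c ^ (-k - 1)) c :=
      Real.hasDerivAt_rpow_const (Or.inl hc0.ne')
    have hmul := h1.mul h2
    have hL := hk c hc
    have hLc : Lstar c ≠ 0 := (hLpos c hc).ne'
    have hd : deriv Lstar c = k * Lstar c / c := by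
      field_simp at hL
      field_simp
      linarith
    have hpow : c ^ (-k - 1) = c ^ (-k) / c := by
      rw [Real.rpow_sub hc0, Real.rpow_one]
    refine hmul.congr_deriv ?_
    rw [hd, hpow]
    field_simp
    ring
  have hconst : ∀ c ∈ I, g c = g (cstar p₀) := by
    intro c hc
    have hb := hconv.norm_image_sub_le_of_norm_hasDerivWithin_le
      (f' := fun _ => (0:ℝ)) (fun x hx => (hg x hx).hasDerivWithinAt)
      (fun x hx => by simp : ∀ x ∈ I, ‖(0:ℝ)‖ ≤ (0:ℝ)) hc₀I hc
    simpa [sub_eq_zero] using hb.trans_eq (zero_mul _)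
  refine ⟨g (cstar p₀), mul_pos (hLpos _ hc₀I) (Real.rpow_pos_of_pos (hIpos hc₀I) _), -k, ?_⟩
  intro c hc
  have hc0 : (0:ℝ) < c := hIpos hc
  have h := hconst c hc
  have h2 : Lstar c * c ^ (-k) * c ^ k = g (cstar p₀) * c ^ k := by
    rw [← h]
  rw [mul_assoc, ← Real.rpow_add hc0, neg_add_cancel, Real.rpow_zero, mul_one] at h2
  rw [neg_neg]
  exact h2
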